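/- arXiv:0907.5079 — 2 statements merged into one kernel-verified Lean document; each statement's English description precedes it below -/
import Mathlib

section
/- Let Γ be a group acting on the right on a finite graph T and on the left on a finite graph H, and let G be a finite graph. Let Γ act on the poset Hom(T × H, G) by (γ·α)(t,h) = α(t·γ, γ^{-1}·h), and let Hom_Γ(T × H, G) be the subposet of fixed points. Then precomposition with the quotient graph homomorphism p : T × H → T ×_Γ H defines an order-preserving injection from Hom(T ×_Γ H, G) into Hom(T × H, G) whose image is exactly Hom_Γ(T × H, G), and which is an isomorphism of posets onto Hom_Γ(T × H, G). -/
/-- A graph: a vertex set with a symmetric adjacency relation (loops allowed). -/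
structure SymGraph (V : Type) where
  Adj : V → V → Prop
  symm : ∀ x y, Adj x y → Adj y x

/-- Multihomomorphisms from `G` to `H`. -/
def SymGraph.IsMultiHom {V W : Type} (G : SymGraph V) (H : SymGraph W) (α : V → Set W) : Prop :=
  (∀ v, (α v).Nonempty) ∧ ∀ v w, G.Adj v w → ∀ x ∈ α v, ∀ y ∈ α w, H.Adj x y

/-- The Hom poset `Hom(G,H)`. -/
def HomPoset {V W : Type} (G : SymGraph V) (H : SymGraph W) : Type :=
  {α : V → Set W // G.IsMultiHom H α}

instance {V W : Type} (G : SymGraph V) (H : SymGraph W) : PartialOrder (HomPoset G H) :=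
  Subtype.partialOrder _

/-- The categorical product of graphs. -/
def SymGraph.prod {V W : Type} (G : SymGraph V) (H : SymGraph W) : SymGraph (V × W) where
  Adj a b := G.Adj a.1 b.1 ∧ H.Adj a.2 b.2
  symm _ _ h := ⟨G.symm _ _ h.1, H.symm _ _ h.2⟩

section Twisted

variable {Γ VT VH VG : Type} [Group Γ]

/-- The orbit relation of the diagonal action `γ·(t,h) = (t·γ⁻¹, γ·h)` on `T × H`. -/
def twRel (actT : VT → Γ → VT) (actH : Γ → VH → VH) (a b : VT × VH) : Prop :=
  ∃ γ : Γ, b = (actT a.1 γ⁻¹, actH γ a.2)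

/-- The twisted product graph `T ×_Γ H`: the quotient graph of `T × H` by the
diagonal `Γ`-action; two orbits are adjacent iff they contain adjacent
representatives. -/
def twProd (T : SymGraph VT) (H : SymGraph VH) (actT : VT → Γ → VT) (actH : Γ → VH → VH) :
    SymGraph (Quot (twRel actT actH)) where
  Adj X Y := ∃ a b, Quot.mk _ a = X ∧ Quot.mk _ b = Y ∧ (T.prod H).Adj a b
  symm X Y h := by
    obtain ⟨a, b, ha, hb, hab⟩ := h
    exact ⟨b, a, hb, ha, (T.prod H).symm _ _ hab⟩

/-- Precomposition with the quotient graph homomorphism `p : T × H → T ×_Γ H`. -/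
def precompQuot (T : SymGraph VT) (H : SymGraph VH) (G : SymGraph VG)
    (actT : VT → Γ → VT) (actH : Γ → VH → VH)
    (α : HomPoset (twProd T H actT actH) G) : HomPoset (T.prod H) G :=
  ⟨fun a => α.1 (Quot.mk _ a),
   ⟨fun a => α.2.1 _,
    fun a b hab => α.2.2 _ _ ⟨a, b, rfl, rfl, hab⟩⟩⟩

/-- The action of `γ ∈ Γ` on `Hom(T × H, G)`, `(γ·α)(t,h) = α(t·γ, γ⁻¹·h)`. -/
def homActProd (T : SymGraph VT) (H : SymGraph VH) (G : SymGraph VG)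
    (actT : VT → Γ → VT) (actH : Γ → VH → VH)
    (hTadj : ∀ (γ : Γ) t t', T.Adj t t' → T.Adj (actT t γ) (actT t' γ))
    (hHadj : ∀ (γ : Γ) h h', H.Adj h h' → H.Adj (actH γ h) (actH γ h'))
    (γ : Γ) (α : HomPoset (T.prod H) G) : HomPoset (T.prod H) G :=
  ⟨fun a => α.1 (actT a.1 γ, actH γ⁻¹ a.2),
   ⟨fun a => α.2.1 _,
    fun a b hab => α.2.2 _ _ ⟨hTadj γ _ _ hab.1, hHadj γ⁻¹ _ _ hab.2⟩⟩⟩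

end Twisted

/-- precomposition with the quotient homomorphism `p : T × H → T ×_Γ H`
is an order-preserving injection of `Hom(T ×_Γ H, G)` into `Hom(T × H, G)` whose
image is exactly the fixed-point subposet `Hom_Γ(T × H, G)`, and which is an order
isomorphism onto that subposet. -/
theorem stmt_2 {Γ VT VH VG : Type} [Group Γ] [Fintype VT] [Fintype VH] [Fintype VG]
    (T : SymGraph VT) (H : SymGraph VH) (G : SymGraph VG)
    (actT : VT → Γ → VT)
    (hT1 : ∀ t, actT t 1 = t)
    (hTmul : ∀ t (γ δ : Γ), actT t (γ * δ) = actT (actT t γ) δ)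
    (hTadj : ∀ (γ : Γ) t t', T.Adj t t' → T.Adj (actT t γ) (actT t' γ))
    (actH : Γ → VH → VH)
    (hH1 : ∀ h, actH 1 h = h)
    (hHmul : ∀ (γ δ : Γ) h, actH (γ * δ) h = actH γ (actH δ h))
    (hHadj : ∀ (γ : Γ) h h', H.Adj h h' → H.Adj (actH γ h) (actH γ h')) :
    Monotone (precompQuot T H G actT actH) ∧
    Function.Injective (precompQuot T H G actT actH) ∧
    Set.range (precompQuot T H G actT actH) =
      {α : HomPoset (T.prod H) G | ∀ γ : Γ, homActProd T H G actT actH hTadj hHadj γ α = α} ∧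
    (∀ α β : HomPoset (twProd T H actT actH) G,
      precompQuot T H G actT actH α ≤ precompQuot T H G actT actH β ↔ α ≤ β) := by
  constructor
  · intro α β h a
    exact h (Quot.mk _ a)
  constructor
  · intro α β h
    apply Subtype.ext
    funext X
    induction X using Quot.ind with
    | _ a => exact congrFun (congrArg Subtype.val h) a
  constructor
  · ext α
    constructor
    · rintro ⟨β, rfl⟩ γ
      apply Subtype.ext
      funext a
      show β.1 (Quot.mk _ (actT a.1 γ, actH γ⁻¹ a.2)) = β.1 (Quot.mk _ a)
      exact congrArg β.1 (Quot.sound (r := twRel actT actH) (a := a) (b := (actT a.1 γ, actH γ⁻¹ a.2)) ⟨γ⁻¹, by simp⟩).symm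
    · intro hfix
      have key : ∀ a b, twRel actT actH a b → α.1 a = α.1 b := by
        rintro a b ⟨γ, rfl⟩
        have := congrFun (congrArg Subtype.val (hfix γ⁻¹)) a
        simpa [homActProd] using this.symm
      refine ⟨⟨Quot.lift α.1 key, ?_, ?_⟩, ?_⟩
      · intro X
        induction X using Quot.ind with
        | _ a => exact α.2.1 a
      · rintro X Y ⟨a, b, rfl, rfl, hab⟩
        exact α.2.2 a b hab
      · apply Subtype.ext; rfl
  · intro α β
    constructor
    · intro h X
      induction X using Quot.ind with
      | _ a => exact h a
    · intro h a
      exact h (Quot.mk _ a)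
end

section
/- Let P be a finite poset with a free action of a finite group Γ by order automorphisms, and let k ≥ 0. Then the induced Γ-action on the reflexive graph (Chain^k(P))^1 is 2^k-discontinuous: for every vertex c of (Chain^k(P))^1 and every nonidentity γ ∈ Γ, every walk in (Chain^k(P))^1 from c to γ·c has length at least 2^k. -/
/-- A graph: a vertex set with a symmetric adjacency relation (loops allowed). -/
structure RGraph (V : Type) where
  Adj : V → V → Prop
  symm : ∀ x y, Adj x y → Adj y x

/-- A walk of length `l` from `v` to `w`. -/
def RGraph.HasWalk {V : Type} (G : RGraph V) (l : ℕ) (v w : V) : Prop :=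
  ∃ f : ℕ → V, f 0 = v ∧ f l = w ∧ ∀ i < l, G.Adj (f i) (f (i + 1))

/-- The atoms (minimal elements) of a poset. -/
def MinVert (P : Type) [PartialOrder P] : Type := {x : P // ∀ y, y ≤ x → y = x}

/-- The reflexive graph `P^1` on the atoms of `P`. -/
def oneSkel (P : Type) [PartialOrder P] : RGraph (MinVert P) where
  Adj a b := ∃ z, a.1 ≤ z ∧ b.1 ≤ z
  symm a b h := by obtain ⟨z, h1, h2⟩ := h; exact ⟨z, h2, h1⟩

/-- The poset `Chain(P)` of nonempty finite chains of `P`, ordered by inclusion. -/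
def ChainPoset (P : Type) [PartialOrder P] : Type :=
  {c : Set P // c.Nonempty ∧ c.Finite ∧ IsChain (· ≤ ·) c}

instance chainPosetPO (P : Type) [PartialOrder P] : PartialOrder (ChainPoset P) :=
  Subtype.partialOrder _

/-- The map `Chain(P) → Chain(Q)` induced by a monotone map, by taking images. -/
def chainMap {P Q : Type} [PartialOrder P] [PartialOrder Q] (f : P → Q) (hf : Monotone f)
    (c : ChainPoset P) : ChainPoset Q :=
  ⟨f '' c.1, c.2.1.image f, c.2.2.1.image f,
   c.2.2.2.image_of_map_rel _ _ f (fun _ _ h => hf h)⟩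

theorem chainMap_mono {P Q : Type} [PartialOrder P] [PartialOrder Q] (f : P → Q)
    (hf : Monotone f) : Monotone (chainMap f hf) :=
  fun _ _ h => Set.image_mono (f := f) h

theorem chainMap_cancel {P : Type} [PartialOrder P] (f g : P → P)
    (hf : Monotone f) (hg : Monotone g) (hfg : ∀ x, f (g x) = x) (c : ChainPoset P) :
    chainMap f hf (chainMap g hg c) = c := by
  apply Subtype.ext
  show f '' (g '' c.1) = c.1
  rw [Set.image_image]
  have h : (fun x => f (g x)) = fun x => x := funext hfg
  rw [h, Set.image_id']

/-- The iterated chain poset `Chain^k(P)`, together with its partial order. -/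
def IterChainAux (P : Type) (po : PartialOrder P) : ℕ → (T : Type) × PartialOrder T
  | 0 => ⟨P, po⟩
  | k + 1 => ⟨@ChainPoset (IterChainAux P po k).1 (IterChainAux P po k).2,
      @chainPosetPO (IterChainAux P po k).1 (IterChainAux P po k).2⟩

/-- `Chain^k(P)`. -/
abbrev IterChain (P : Type) [po : PartialOrder P] (k : ℕ) : Type :=
  (IterChainAux P po k).1

instance (P : Type) [po : PartialOrder P] (k : ℕ) : PartialOrder (IterChain P k) :=
  (IterChainAux P po k).2

/-- The monotone map `Chain^k(P) → Chain^k(P)` induced by a monotone map `P → P`. -/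
def iterMapAux (P : Type) (po : PartialOrder P) (f : P → P)
    (hf : @Monotone P P po.toPreorder po.toPreorder f) :
    ∀ k : ℕ, {g : IterChain P k → IterChain P k // Monotone g}
  | 0 => ⟨f, hf⟩
  | k + 1 => ⟨chainMap (iterMapAux P po f hf k).1 (iterMapAux P po f hf k).2,
      chainMap_mono _ _⟩

theorem iterMapAux_cancel (P : Type) (po : PartialOrder P) (f g : P → P)
    (hf : @Monotone P P po.toPreorder po.toPreorder f) (hg : @Monotone P P po.toPreorder po.toPreorder g)
    (hfg : ∀ x, f (g x) = x) :
    ∀ (k : ℕ) (c : IterChain P k),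
      (iterMapAux P po f hf k).1 ((iterMapAux P po g hg k).1 c) = c
  | 0, c => hfg c
  | k + 1, c => chainMap_cancel (iterMapAux P po f hf k).1 (iterMapAux P po g hg k).1
      (iterMapAux P po f hf k).2 (iterMapAux P po g hg k).2
      (iterMapAux_cancel P po f g hf hg hfg k) c

/-- The map induced on atoms by a monotone map with a two-sided monotone inverse. -/
def minMap {Q : Type} [PartialOrder Q] (f g : Q → Q) (hg : Monotone g)
    (hfg : ∀ x, f (g x) = x) (hgf : ∀ x, g (f x) = x) (x : MinVert Q) : MinVert Q :=
  ⟨f x.1, fun q hq => by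
    have h1 : g q ≤ x.1 := by have := hg hq; rwa [hgf] at this
    have h2 := x.2 _ h1
    have h3 : f (g q) = f x.1 := by rw [h2]
    rwa [hfg] at h3⟩

/-- The action of `γ ∈ Γ` on the atoms of `Chain^k(P)` induced by a `Γ`-action on
`P` by order automorphisms. -/
def iterMinAct {Γ P : Type} [Group Γ] [po : PartialOrder P] [MulAction Γ P]
    (hmono : ∀ γ : Γ, Monotone (fun p : P => γ • p)) (γ : Γ) (k : ℕ) :
    MinVert (IterChain P k) → MinVert (IterChain P k) :=
  minMap (iterMapAux P po (fun p => γ • p) (hmono γ) k).1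
    (iterMapAux P po (fun p => γ⁻¹ • p) (hmono γ⁻¹) k).1
    (iterMapAux P po (fun p => γ⁻¹ • p) (hmono γ⁻¹) k).2
    (iterMapAux_cancel P po _ _ (hmono γ) (hmono γ⁻¹) (fun x => smul_inv_smul γ x) k)
    (iterMapAux_cancel P po _ _ (hmono γ⁻¹) (hmono γ) (fun x => inv_smul_smul γ x) k)

lemma finite_exists_minimal_wrt {Q : Type} [PartialOrder Q] (s : Set Q) (h : s.Finite)
    (hs : s.Nonempty) : ∃ a ∈ s, ∀ a' ∈ s, a' ≤ a → a = a' := by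
  obtain ⟨a, ha, hm⟩ := h.exists_minimal hs
  exact ⟨a, ha, fun a' ha' hle => le_antisymm (hm ha' hle) hle⟩

/-! ### Auxiliary lemmas on walks in the one-skeleton of a finite poset -/

section WalkAux

variable {Q : Type} [PartialOrder Q]

/-- Comparability of two elements of a poset. -/
def PComp (a b : Q) : Prop := a ≤ b ∨ b ≤ a

lemma oneSkel_refl (u : MinVert Q) : (oneSkel Q).Adj u u := ⟨u.1, le_refl _, le_refl _⟩

lemma hasWalk_one {u v : MinVert Q} (h : (oneSkel Q).Adj u v) :
    (oneSkel Q).HasWalk 1 u v := by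
  refine ⟨fun i => if i = 0 then u else v, by simp, by simp, ?_⟩
  intro i hi
  have : i = 0 := by omega
  subst this
  simpa using h

lemma hasWalk_snoc {l : ℕ} {u v x : MinVert Q} (h : (oneSkel Q).HasWalk l u v)
    (hadj : (oneSkel Q).Adj v x) : (oneSkel Q).HasWalk (l + 1) u x := by
  obtain ⟨f, h0, hl, ha⟩ := h
  refine ⟨fun i => if i ≤ l then f i else x, ?_, ?_, ?_⟩
  · simp [h0]
  · simp only [if_neg (by omega : ¬ l + 1 ≤ l)]
  · intro i hi
    rcases Nat.lt_or_ge i l with h' | h'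
    · simp only [if_pos h'.le, if_pos (Nat.succ_le_of_lt h')]
      exact ha i h'
    · have hil : i = l := by omega
      subst hil
      simp only [if_pos (le_refl i), if_neg (by omega : ¬ i + 1 ≤ i)]
      rw [hl]
      exact hadj

lemma hasWalk_mono {l l' : ℕ} (h : l ≤ l') {u v : MinVert Q}
    (hw : (oneSkel Q).HasWalk l u v) : (oneSkel Q).HasWalk l' u v := by
  induction h with
  | refl => exact hw
  | step _ ih => exact hasWalk_snoc ih (oneSkel_refl v)

lemma exists_atom_le [Finite Q] (x : Q) : ∃ m : MinVert Q, m.1 ≤ x := by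
  obtain ⟨a, ha, hmin⟩ :=
    finite_exists_minimal_wrt {y : Q | y ≤ x} (Set.toFinite _) ⟨x, le_refl x⟩
  exact ⟨⟨a, fun y hy => (hmin y (le_trans hy ha) hy).symm⟩, ha⟩

/-- There is an atom `v ≤ b` reachable in `d` steps from every atom `u ≤ a`. -/
def AW (d : ℕ) (a b : Q) : Prop :=
  ∃ v : MinVert Q, v.1 ≤ b ∧ ∀ u : MinVert Q, u.1 ≤ a → (oneSkel Q).HasWalk d u v

/-- There is an atom `u ≤ a` from which every atom `v ≤ b` is reachable in `d` steps. -/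
def BW (d : ℕ) (a b : Q) : Prop :=
  ∃ u : MinVert Q, u.1 ≤ a ∧ ∀ v : MinVert Q, v.1 ≤ b → (oneSkel Q).HasWalk d u v

lemma AW_mono {d d' : ℕ} (h : d ≤ d') {a b : Q} (hw : AW d a b) : AW d' a b := by
  obtain ⟨v, hv, hwk⟩ := hw
  exact ⟨v, hv, fun u hu => hasWalk_mono h (hwk u hu)⟩

lemma BW_mono {d d' : ℕ} (h : d ≤ d') {a b : Q} (hw : BW d a b) : BW d' a b := by
  obtain ⟨u, hu, hwk⟩ := hw
  exact ⟨u, hu, fun v hv => hasWalk_mono h (hwk v hv)⟩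

lemma walk2 [Finite Q] {a b c : Q} (h1 : PComp a b) (h2 : PComp b c) :
    PComp a c ∨ AW 1 a c ∨ BW 1 a c := by
  rcases h1 with h1 | h1
  · rcases h2 with h2 | h2
    · exact Or.inl (Or.inl (le_trans h1 h2))
    · obtain ⟨v, hv⟩ := exists_atom_le (Q := Q) c
      exact Or.inr (Or.inl ⟨v, hv, fun u hu =>
        hasWalk_one ⟨b, le_trans hu h1, le_trans hv h2⟩⟩)
  · rcases h2 with h2 | h2
    · obtain ⟨u, hu⟩ := exists_atom_le (Q := Q) b
      exact Or.inr (Or.inr ⟨u, le_trans hu h1, fun v hv =>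
        hasWalk_one ⟨c, le_trans hu h2, hv⟩⟩)
    · exact Or.inl (Or.inr (le_trans h2 h1))

lemma walk3 [Finite Q] {a b c d : Q} (h1 : PComp a b) (h2 : PComp b c) (h3 : PComp c d) :
    PComp a d ∨ AW 1 a d ∨ BW 1 a d := by
  rcases h1 with h1 | h1 <;> rcases h2 with h2 | h2 <;> rcases h3 with h3 | h3
  · exact Or.inl (Or.inl (le_trans h1 (le_trans h2 h3)))
  · obtain ⟨v, hv⟩ := exists_atom_le (Q := Q) d
    exact Or.inr (Or.inl ⟨v, hv, fun u hu =>
      hasWalk_one ⟨c, le_trans hu (le_trans h1 h2), le_trans hv h3⟩⟩)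
  · obtain ⟨v, hv⟩ := exists_atom_le (Q := Q) c
    exact Or.inr (Or.inl ⟨v, le_trans hv h3, fun u hu =>
      hasWalk_one ⟨b, le_trans hu h1, le_trans hv h2⟩⟩)
  · obtain ⟨v, hv⟩ := exists_atom_le (Q := Q) d
    exact Or.inr (Or.inl ⟨v, hv, fun u hu =>
      hasWalk_one ⟨b, le_trans hu h1, le_trans hv (le_trans h3 h2)⟩⟩)
  · obtain ⟨u, hu⟩ := exists_atom_le (Q := Q) b
    exact Or.inr (Or.inr ⟨u, le_trans hu h1, fun v hv =>
      hasWalk_one ⟨d, le_trans hu (le_trans h2 h3), hv⟩⟩)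
  · obtain ⟨u, hu⟩ := exists_atom_le (Q := Q) b
    exact Or.inr (Or.inr ⟨u, le_trans hu h1, fun v hv =>
      hasWalk_one ⟨c, le_trans hu h2, le_trans hv h3⟩⟩)
  · obtain ⟨u, hu⟩ := exists_atom_le (Q := Q) c
    exact Or.inr (Or.inr ⟨u, le_trans hu (le_trans h2 h1), fun v hv =>
      hasWalk_one ⟨d, le_trans hu h3, hv⟩⟩)
  · exact Or.inl (Or.inr (le_trans h3 (le_trans h2 h1)))

lemma extAW [Finite Q] {d : ℕ} {a b b' b'' : Q} (h : AW d a b)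
    (h1 : PComp b b') (h2 : PComp b' b'') : AW (d + 1) a b'' := by
  obtain ⟨v, hv, hw⟩ := h
  rcases h2 with h2 | h2
  · obtain ⟨v', hv'⟩ := exists_atom_le (Q := Q) b'
    refine ⟨v', le_trans hv' h2, fun u hu => hasWalk_snoc (hw u hu) ?_⟩
    rcases h1 with h1 | h1
    · exact ⟨b', le_trans hv h1, hv'⟩
    · exact ⟨b, hv, le_trans hv' h1⟩
  · obtain ⟨v', hv'⟩ := exists_atom_le (Q := Q) b''
    refine ⟨v', hv', fun u hu => hasWalk_snoc (hw u hu) ?_⟩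
    have hvb' : v'.1 ≤ b' := le_trans hv' h2
    rcases h1 with h1 | h1
    · exact ⟨b', le_trans hv h1, hvb'⟩
    · exact ⟨b, hv, le_trans hvb' h1⟩

lemma extBW [Finite Q] {d : ℕ} {a b b' b'' : Q} (h : BW d a b)
    (h1 : PComp b b') (h2 : PComp b' b'') : BW (d + 1) a b'' := by
  obtain ⟨u, hu, hw⟩ := h
  refine ⟨u, hu, fun v hv => ?_⟩
  rcases h1 with h1 | h1
  · obtain ⟨v', hv'⟩ := exists_atom_le (Q := Q) b
    refine hasWalk_snoc (hw v' hv') ?_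
    rcases h2 with h2 | h2
    · exact ⟨b'', le_trans hv' (le_trans h1 h2), hv⟩
    · exact ⟨b', le_trans hv' h1, le_trans hv h2⟩
  · obtain ⟨v', hv'⟩ := exists_atom_le (Q := Q) b'
    refine hasWalk_snoc (hw v' (le_trans hv' h1)) ?_
    rcases h2 with h2 | h2
    · exact ⟨b'', le_trans hv' h2, hv⟩
    · exact ⟨b', hv', le_trans hv h2⟩

lemma mainWalk [Finite Q] : ∀ l : ℕ, 1 ≤ l → ∀ q : ℕ → Q,
    (∀ i < l, PComp (q i) (q (i + 1))) →
    PComp (q 0) (q l) ∨ AW (l / 2) (q 0) (q l) ∨ BW (l / 2) (q 0) (q l) := by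
  intro l
  induction l using Nat.strong_induction_on with
  | _ l ih =>
    intro hl q hq
    rcases Nat.lt_or_ge l 3 with h3 | h3
    · interval_cases l
      · exact Or.inl (hq 0 (by omega))
      · rcases walk2 (hq 0 (by omega)) (hq 1 (by omega)) with h | h | h
        · exact Or.inl h
        · exact Or.inr (Or.inl h)
        · exact Or.inr (Or.inr h)
    · obtain ⟨n, rfl⟩ : ∃ n, l = n + 3 := ⟨l - 3, by omega⟩
      rcases ih (n + 1) (by omega) (by omega) q (fun i hi => hq i (by omega)) with
        hc | ha | hb
      · rcases walk3 hc (hq (n + 1) (by omega)) (hq (n + 2) (by omega)) with h | h | h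
        · exact Or.inl h
        · exact Or.inr (Or.inl (AW_mono (by omega) h))
        · exact Or.inr (Or.inr (BW_mono (by omega) h))
      · have h := extAW ha (hq (n + 1) (by omega)) (hq (n + 2) (by omega))
        have e : (n + 1) / 2 + 1 = (n + 3) / 2 := by omega
        rw [e] at h
        exact Or.inr (Or.inl h)
      · have h := extBW hb (hq (n + 1) (by omega)) (hq (n + 2) (by omega))
        have e : (n + 1) / 2 + 1 = (n + 3) / 2 := by omega
        rw [e] at h
        exact Or.inr (Or.inr h)

end WalkAux

/-! ### Auxiliary lemmas on iterated chain posets -/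

lemma iterFinite (P : Type) [po : PartialOrder P] [Finite P] : ∀ k, Finite (IterChain P k)
  | 0 => ‹Finite P›
  | k + 1 => by
    have := iterFinite P k
    show Finite (ChainPoset (IterChain P k))
    unfold ChainPoset
    exact Subtype.finite

lemma chainFix {Q : Type} [PartialOrder Q] (F : Q → Q) (hF : Monotone F)
    (s : Set Q) (hne : s.Nonempty) (hfin : s.Finite) (hchain : IsChain (· ≤ ·) s)
    (h : F '' s = s) : ∃ m ∈ s, F m = m := by
  obtain ⟨m, hm, hmin⟩ := finite_exists_minimal_wrt s hfin hne
  have hminimum : ∀ x ∈ s, m ≤ x := by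
    intro x hx
    by_cases hxm : x = m
    · exact le_of_eq hxm.symm
    · rcases hchain hx hm hxm with h' | h'
      · exact le_of_eq (hmin x hx h')
      · exact h'
  have h1 : F m ∈ s := h ▸ Set.mem_image_of_mem F hm
  have h2 : m ≤ F m := hminimum _ h1
  have hm' : m ∈ F '' s := h.symm ▸ hm
  obtain ⟨x, hx, hxm⟩ := hm'
  have h3 : F m ≤ m := by
    have := hF (hminimum x hx)
    rwa [hxm] at this
  exact ⟨m, hm, le_antisymm h3 h2⟩

section IterAux

variable {Γ P : Type} [Group Γ] [po : PartialOrder P] [MulAction Γ P]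

lemma iterFix (hmono : ∀ γ : Γ, Monotone (fun p : P => γ • p))
    (hfree : ∀ (γ : Γ) (p : P), γ • p = p → γ = 1) :
    ∀ (k : ℕ) (γ : Γ) (q : IterChain P k),
      (iterMapAux P po (fun p => γ • p) (hmono γ) k).1 q = q → γ = 1
  | 0, γ, q, h => hfree γ q h
  | k + 1, γ, q, h => by
    have hs : (iterMapAux P po (fun p => γ • p) (hmono γ) k).1 '' q.1 = q.1 :=
      congrArg Subtype.val h
    obtain ⟨m, _, hfix⟩ := chainFix (iterMapAux P po (fun p => γ • p) (hmono γ) k).1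
      (iterMapAux P po (fun p => γ • p) (hmono γ) k).2 q.1 q.2.1 q.2.2.1 q.2.2.2 hs
    exact iterFix hmono hfree k γ m hfix

lemma iterOne (hmono : ∀ γ : Γ, Monotone (fun p : P => γ • p)) :
    ∀ (k : ℕ) (q : IterChain P k),
      (iterMapAux P po (fun p => (1 : Γ) • p) (hmono 1) k).1 q = q
  | 0, q => @one_smul Γ P _ _ q
  | k + 1, q => by
    apply Subtype.ext
    show (iterMapAux P po (fun p => (1 : Γ) • p) (hmono 1) k).1 '' q.1 = q.1
    rw [show (iterMapAux P po (fun p => (1 : Γ) • p) (hmono 1) k).1 = fun x => x from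
      funext (iterOne hmono k), Set.image_id']

lemma iterMul (hmono : ∀ γ : Γ, Monotone (fun p : P => γ • p)) (α β : Γ) :
    ∀ (k : ℕ) (q : IterChain P k),
      (iterMapAux P po (fun p => α • p) (hmono α) k).1
          ((iterMapAux P po (fun p => β • p) (hmono β) k).1 q)
        = (iterMapAux P po (fun p => (α * β) • p) (hmono (α * β)) k).1 q
  | 0, q => (@mul_smul Γ P _ _ α β q).symm
  | k + 1, q => by
    apply Subtype.ext
    show (iterMapAux P po (fun p => α • p) (hmono α) k).1 ''
        ((iterMapAux P po (fun p => β • p) (hmono β) k).1 '' q.1)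
      = (iterMapAux P po (fun p => (α * β) • p) (hmono (α * β)) k).1 '' q.1
    rw [Set.image_image]
    exact Set.image_congr' (fun x => iterMul hmono α β k x)

lemma iterAscend [Fintype Γ] (hmono : ∀ γ : Γ, Monotone (fun p : P => γ • p))
    (hfree : ∀ (γ : Γ) (p : P), γ • p = p → γ = 1) (k : ℕ) (δ : Γ) (q : IterChain P k)
    (h : q ≤ (iterMapAux P po (fun p => δ • p) (hmono δ) k).1 q) : δ = 1 := by
  have key : ∀ m : ℕ, q ≤ (iterMapAux P po (fun p => δ ^ m • p) (hmono (δ ^ m)) k).1 q := by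
    intro m
    induction m with
    | zero =>
      rw [pow_zero, iterOne hmono k q]
    | succ m ihm =>
      have step := (iterMapAux P po (fun p => δ • p) (hmono δ) k).2 ihm
      have htr := le_trans h step
      rwa [iterMul hmono δ (δ ^ m) k q, ← pow_succ'] at htr
  have hcard : δ ^ Fintype.card Γ = 1 := pow_card_eq_one
  have hpos : 0 < Fintype.card Γ := Fintype.card_pos
  have h1 := key (Fintype.card Γ - 1)
  have h2 := (iterMapAux P po (fun p => δ • p) (hmono δ) k).2 h1
  rw [iterMul hmono δ (δ ^ (Fintype.card Γ - 1)) k q, ← pow_succ'] at h2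
  rw [show Fintype.card Γ - 1 + 1 = Fintype.card Γ from by omega, hcard] at h2
  rw [iterOne hmono k q] at h2
  exact iterFix hmono hfree k δ q (le_antisymm h2 h)

lemma iterPComp [Fintype Γ] (hmono : ∀ γ : Γ, Monotone (fun p : P => γ • p))
    (hfree : ∀ (γ : Γ) (p : P), γ • p = p → γ = 1) (k : ℕ) (γ : Γ) (q : IterChain P k)
    (h : PComp q ((iterMapAux P po (fun p => γ • p) (hmono γ) k).1 q)) : γ = 1 := by
  rcases h with h | h
  · exact iterAscend hmono hfree k γ q h
  · have h2 := (iterMapAux P po (fun p => γ⁻¹ • p) (hmono γ⁻¹) k).2 h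
    rw [iterMapAux_cancel P po _ _ (hmono γ⁻¹) (hmono γ)
      (fun p => inv_smul_smul γ p) k q] at h2
    have := iterAscend hmono hfree k γ⁻¹ q h2
    simpa using this

end IterAux

/-- if a finite group `Γ` acts freely on a finite poset `P` by order
automorphisms, the induced action on `(Chain^k(P))^1` is `2^k`-discontinuous: every
walk from a vertex `c` to `γ·c` with `γ ≠ 1` has length at least `2^k`. -/
theorem stmt_12 {Γ P : Type} [Group Γ] [Fintype Γ] [PartialOrder P] [Fintype P]
    [MulAction Γ P]
    (hmono : ∀ γ : Γ, Monotone (fun p : P => γ • p))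
    (hfree : ∀ (γ : Γ) (p : P), γ • p = p → γ = 1) (k : ℕ) :
    ∀ (c : MinVert (IterChain P k)) (γ : Γ), γ ≠ 1 →
      ∀ (l : ℕ) (w : ℕ → MinVert (IterChain P k)),
        w 0 = c → w l = iterMinAct hmono γ k c →
        (∀ i < l, (oneSkel (IterChain P k)).Adj (w i) (w (i + 1))) →
        2 ^ k ≤ l := by
  induction k with
  | zero =>
    intro c γ hγ l w h0 hl hadj
    by_contra hcon
    have hl0 : l = 0 := by omega
    subst hl0
    have heq : iterMinAct hmono γ 0 c = c := by rw [← hl, h0]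
    exact hγ (hfree γ c.1 (congrArg Subtype.val heq))
  | succ k IH =>
    intro c γ hγ l w h0 hl hadj
    haveI : Finite (IterChain P k) := iterFinite P k
    rcases Nat.eq_zero_or_pos l with rfl | hl1
    · exfalso
      have heq : iterMinAct hmono γ (k + 1) c = c := by rw [← hl, h0]
      have h2 : (iterMapAux P ‹PartialOrder P› (fun p => γ • p) (hmono γ) (k + 1)).1 c.1 = c.1 :=
        congrArg Subtype.val heq
      exact hγ (iterFix hmono hfree (k + 1) γ c.1 h2)
    · classical
      have hne : ∀ i : ℕ, ((w i).1).1.Nonempty := fun i => ((w i).1).2.1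
      have hwl : ((w l).1).1 =
          (iterMapAux P ‹PartialOrder P› (fun p => γ • p) (hmono γ) k).1 '' ((w 0).1).1 := by
        rw [hl, h0]; rfl
      obtain ⟨y, hyl⟩ := hne l
      have hyl' := hyl
      rw [hwl] at hyl'
      obtain ⟨x, hx, hxy⟩ := hyl'
      set q : ℕ → IterChain P k :=
        fun i => if i = 0 then x else if i = l then y else (hne i).some with hqdef
      have hq0 : q 0 = x := by simp [hqdef]
      have hql' : q l = y := by simp [hqdef, Nat.pos_iff_ne_zero.mp hl1]
      have hmem : ∀ i ≤ l, q i ∈ ((w i).1).1 := by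
        intro i hi
        by_cases hi0 : i = 0
        · subst hi0; rw [hq0]; exact hx
        · by_cases hil : i = l
          · subst hil; rw [hql']; exact hyl
          · simp only [hqdef, if_neg hi0, if_neg hil]
            exact (hne i).some_mem
      have hcomp : ∀ i < l, PComp (q i) (q (i + 1)) := by
        intro i hi
        obtain ⟨z, hz1, hz2⟩ := hadj i hi
        have hz1' : ((w i).1).1 ⊆ z.1 := hz1
        have hz2' : ((w (i + 1)).1).1 ⊆ z.1 := hz2
        have m1 : q i ∈ z.1 := hz1' (hmem i (le_of_lt hi))
        have m2 : q (i + 1) ∈ z.1 := hz2' (hmem (i + 1) hi)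
        by_cases heq : q i = q (i + 1)
        · exact Or.inl (le_of_eq heq)
        · exact z.2.2.2 m1 m2 heq
      have hql : q l = (iterMapAux P ‹PartialOrder P› (fun p => γ • p) (hmono γ) k).1 (q 0) := by
        rw [hq0, hql']
        exact hxy.symm
      rcases mainWalk l hl1 q hcomp with hc | hAW | hBW
      · exfalso
        rw [hql] at hc
        exact hγ (iterPComp hmono hfree k γ (q 0) hc)
      · obtain ⟨v, hv, hwk⟩ := hAW
        set u : MinVert (IterChain P k) := iterMinAct hmono γ⁻¹ k v with hudef
        have hu1 : u.1 ≤ q 0 := by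
          have step : (iterMapAux P ‹PartialOrder P› (fun p => γ⁻¹ • p) (hmono γ⁻¹) k).1 v.1 ≤
              (iterMapAux P ‹PartialOrder P› (fun p => γ⁻¹ • p) (hmono γ⁻¹) k).1 (q l) :=
            (iterMapAux P ‹PartialOrder P› (fun p => γ⁻¹ • p) (hmono γ⁻¹) k).2 hv
          rw [hql] at step
          exact le_of_le_of_eq step
            (iterMapAux_cancel P ‹PartialOrder P› (fun p => γ⁻¹ • p) (fun p => γ • p)
              (hmono γ⁻¹) (hmono γ) (fun p => inv_smul_smul γ p) k (q 0))
        have hv2 : iterMinAct hmono γ k u = v := by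
          apply Subtype.ext
          exact iterMapAux_cancel P ‹PartialOrder P› (fun p => γ • p) (fun p => γ⁻¹ • p)
            (hmono γ) (hmono γ⁻¹) (fun p => smul_inv_smul γ p) k v.1
        obtain ⟨f, f0, fl, fadj⟩ := hwk u hu1
        have hIH := IH u γ hγ (l / 2) f f0 (by rw [fl]; exact hv2.symm) fadj
        have hp : 2 ^ (k + 1) = 2 ^ k * 2 := pow_succ 2 k
        omega
      · obtain ⟨u, hu, hwk⟩ := hBW
        have hv1 : (iterMinAct hmono γ k u).1 ≤ q l := by
          have step := (iterMapAux P ‹PartialOrder P› (fun p => γ • p) (hmono γ) k).2 hu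
          rw [← hql] at step
          exact step
        obtain ⟨f, f0, fl, fadj⟩ := hwk (iterMinAct hmono γ k u) hv1
        have hIH := IH u γ hγ (l / 2) f f0 fl fadj
        have hp : 2 ^ (k + 1) = 2 ^ k * 2 := pow_succ 2 k
        omega
end
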